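/- Consider φ² : [0,1]×ℝ² → ℝ defined by φ²(t,x₁,x₂) = t·(|x₁| − |x₂|). There do not exist Υ > 0 and a function H : [0,1]×ℝ²×ℝ² → ℝ with |H(t,x,s)| ≤ Υ‖s‖(1+‖x‖) for all (t,x,s) such that the Hamilton–Jacobi equation holds at all differentiability points of φ², i.e., such that for every t ∈ (0,1) and every (x₁,x₂) ∈ ℝ² with x₁·x₂ ≠ 0 one has (|x₁| − |x₂|) + H(t,(x₁,x₂),(t·sgn x₁, −t·sgn x₂)) = 0, where sgn x = 1 if x > 0 and sgn x = −1 if x < 0. (At such points ∂φ²/∂t = |x₁|−|x₂| and ∇φ² = (t·sgn x₁, −t·sgn x₂).) -/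

import Mathlib

open Set

noncomputable section

abbrev E2 := EuclideanSpace ℝ (Fin 2)

/-- For φ²(t,x₁,x₂) = t(|x₁|−|x₂|) there is no Hamiltonian H with sublinear growth
|H(t,x,s)| ≤ Υ‖s‖(1+‖x‖) satisfying the Hamilton–Jacobi equation
∂φ²/∂t + H(t,x,∇φ²) = 0 at all differentiability points of φ², i.e. such that
(|x₁|−|x₂|) + H(t,(x₁,x₂),(t·sgn x₁, −t·sgn x₂)) = 0 whenever t ∈ (0,1), x₁x₂ ≠ 0. -/
theorem phi2_not_a_value :
    ¬ ∃ Υ : ℝ, 0 < Υ ∧ ∃ H : ℝ → E2 → E2 → ℝ,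
      (∀ t ∈ Icc (0 : ℝ) 1, ∀ x s : E2, |H t x s| ≤ Υ * ‖s‖ * (1 + ‖x‖)) ∧
      (∀ t ∈ Ioo (0 : ℝ) 1, ∀ x s : E2, x 0 * x 1 ≠ 0 →
        s 0 = t * (if 0 < x 0 then (1 : ℝ) else -1) →
        s 1 = -(t * (if 0 < x 1 then (1 : ℝ) else -1)) →
        (|x 0| - |x 1|) + H t x s = 0) := by
  rintro ⟨Υ, hΥ, H, hbd, heq⟩
  set t : ℝ := min (1/2) (1/(10*Υ)) with ht
  have ht0 : 0 < t := lt_min (by norm_num) (by positivity)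
  have ht1 : t < 1 := lt_of_le_of_lt (min_le_left _ _) (by norm_num)
  have htΥ : Υ * t ≤ 1/10 := by
    have : t ≤ 1/(10*Υ) := min_le_right _ _
    calc Υ * t ≤ Υ * (1/(10*Υ)) := by nlinarith
    _ = 1/10 := by field_simp
  set x : E2 := WithLp.toLp 2 (fun i : Fin 2 => if i = 0 then (1:ℝ) else 2) with hx
  set s : E2 := WithLp.toLp 2 (fun i : Fin 2 => if i = 0 then t else -t) with hs
  have hx0 : x 0 = 1 := rfl
  have hx1 : x 1 = 2 := rfl
  have hs0 : s 0 = t := rfl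
  have hs1 : s 1 = -t := rfl
  have hH := heq t ⟨ht0, ht1⟩ x s (by rw [hx0, hx1]; norm_num)
    (by rw [hs0, hx0]; norm_num) (by rw [hs1, hx1]; norm_num)
  rw [hx0, hx1] at hH
  have hHval : H t x s = 1 := by
    have : |(1:ℝ)| = 1 := abs_one
    have h2 : |(2:ℝ)| = 2 := by norm_num
    linarith [hH, this, h2]
  have hb := hbd t ⟨le_of_lt ht0, le_of_lt ht1⟩ x s
  rw [hHval] at hb
  have hns : ‖s‖ = Real.sqrt (2 * t^2) := by
    rw [EuclideanSpace.norm_eq]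
    congr 1
    rw [Fin.sum_univ_two]
    rw [hs0, hs1]
    rw [Real.norm_eq_abs, Real.norm_eq_abs, abs_of_pos ht0, abs_neg, abs_of_pos ht0]
    ring
  have hnx : ‖x‖ = Real.sqrt 5 := by
    rw [EuclideanSpace.norm_eq]
    congr 1
    rw [Fin.sum_univ_two, hx0, hx1]
    norm_num
  have hs_le : ‖s‖ ≤ 3/2 * t := by
    rw [hns]
    have : Real.sqrt (2 * t^2) ≤ Real.sqrt ((3/2*t)^2) := by
      apply Real.sqrt_le_sqrt; nlinarith
    calc Real.sqrt (2 * t^2) ≤ Real.sqrt ((3/2*t)^2) := this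
    _ = 3/2*t := Real.sqrt_sq (by positivity)
  have hx_le : ‖x‖ ≤ 3 := by
    rw [hnx]
    have : Real.sqrt 5 ≤ Real.sqrt 9 := Real.sqrt_le_sqrt (by norm_num)
    calc Real.sqrt 5 ≤ Real.sqrt 9 := this
    _ = 3 := by rw [show (9:ℝ) = 3^2 by norm_num, Real.sqrt_sq]; norm_num
  have habs : |(1:ℝ)| = 1 := abs_one
  have hnsnn : (0:ℝ) ≤ ‖s‖ := norm_nonneg _
  have h1 : Υ * ‖s‖ * (1 + ‖x‖) ≤ Υ * (3/2*t) * 4 := by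
    have h4 : 1 + ‖x‖ ≤ 4 := by linarith
    have hp : 0 ≤ 1 + ‖x‖ := by positivity
    have step1 : Υ * ‖s‖ * (1 + ‖x‖) ≤ Υ * ‖s‖ * 4 :=
      mul_le_mul_of_nonneg_left h4 (by positivity)
    have step2 : Υ * ‖s‖ * 4 ≤ Υ * (3/2*t) * 4 := by nlinarith [hΥ.le]
    linarith
  have : (1:ℝ) ≤ Υ * (3/2*t) * 4 := by rw [habs] at hb; linarith
  nlinarith
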